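/- Let N = {N_1,...,N_r} and M = {M_1,...,M_r} be sequences of subsets of a finite set W with M_i ⊆ N_i for all i and M_1 ∪ ⋯ ∪ M_r = W. Then the inclusion of geometric realizations |K(M)| → |K(N)| is a homotopy equivalence. -/

import Mathlib

set_option linter.unusedSectionVars false
set_option linter.unusedVariables false


/-- `Ñ i = N i ∪ {a i}` on the vertex set `W ⊕ Fin r` (`a i := Sum.inr i`). -/
def Ntilde {W : Type*} [DecidableEq W] {r : ℕ} (N : Fin r → Finset W) (i : Fin r) :
    Finset (W ⊕ Fin r) :=
  (N i).image Sum.inl ∪ {Sum.inr i}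

/-- `K(N)`: the complex on `W ⊕ Fin r` whose faces are the sets containing no `Ñ i`. -/
def KofN {W : Type*} [DecidableEq W] {r : ℕ} (N : Fin r → Finset W)
    (s : Finset (W ⊕ Fin r)) : Prop :=
  ∀ i, ¬ Ntilde N i ⊆ s

/-- The geometric realization of a simplicial complex `K` on a finite vertex set `V`. -/
def realization {V : Type*} [Fintype V] (K : Finset V → Prop) : Set (V → ℝ) :=
  {x | (∀ v, 0 ≤ x v) ∧ (∑ v, x v) = 1 ∧ ∃ σ, K σ ∧ ∀ v, x v ≠ 0 → v ∈ σ}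

/-! ### Auxiliary development -/

attribute [local instance] Classical.propDecidable

namespace Statement9

variable {W : Type*} [DecidableEq W] [Fintype W] {r : ℕ}

/-- The support of a point, as a finset. -/
noncomputable def supp (x : W ⊕ Fin r → ℝ) : Finset (W ⊕ Fin r) :=
  Finset.univ.filter (fun v => x v ≠ 0)

lemma mem_supp {x : W ⊕ Fin r → ℝ} {v : W ⊕ Fin r} : v ∈ supp x ↔ x v ≠ 0 := by
  simp [supp]

lemma kofN_anti {N : Fin r → Finset W} {σ τ : Finset (W ⊕ Fin r)}
    (h : KofN N σ) (hts : τ ⊆ σ) : KofN N τ :=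
  fun i hi => h i (hi.trans hts)

lemma supp_mem {N : Fin r → Finset W} {x : W ⊕ Fin r → ℝ}
    (hx : x ∈ realization (KofN N)) : KofN N (supp x) := by
  obtain ⟨-, -, σ, hσ, hs⟩ := hx
  exact kofN_anti hσ (fun v hv => hs v (mem_supp.mp hv))

lemma mem_realization_supp {K : Finset (W ⊕ Fin r) → Prop} {x : W ⊕ Fin r → ℝ}
    (h0 : ∀ v, 0 ≤ x v) (h1 : ∑ v, x v = 1) (h : K (supp x)) :
    x ∈ realization K :=
  ⟨h0, h1, supp x, h, fun v hv => mem_supp.mpr hv⟩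

lemma realization_mono {M N : Fin r → Finset W} (h : ∀ i, M i ⊆ N i) :
    realization (KofN M) ⊆ realization (KofN N) := by
  rintro x ⟨h0, h1, σ, hσ, hs⟩
  refine ⟨h0, h1, σ, fun i hi => hσ i ?_, hs⟩
  exact (Finset.union_subset_union (Finset.image_subset_image (h i)) subset_rfl).trans hi

lemma continuous_finset_inf' {α : Type*} (s : Finset α) (hs : s.Nonempty) :
    Continuous fun x : α → ℝ => s.inf' hs x := by
  induction hs using Finset.Nonempty.cons_induction with
  | singleton a => simpa using continuous_apply a
  | cons a s ha hs ih =>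
    simpa only [Finset.inf'_cons (H := hs)] using (continuous_apply a).min ih

lemma tau_ne (P : Fin r → Finset W) (i₀ : Fin r) : (Ntilde P i₀).Nonempty :=
  ⟨Sum.inr i₀, Finset.mem_union_right _ (Finset.mem_singleton_self _)⟩

/-- The minimum of `x` on `Ñ(P) i₀`. -/
noncomputable def bfun (P : Fin r → Finset W) (i₀ : Fin r) (x : W ⊕ Fin r → ℝ) : ℝ :=
  (Ntilde P i₀).inf' (tau_ne P i₀) x

/-- The straight-line homotopy: pushes mass equally off the face `Ñ(P) i₀` onto `a j`. -/
noncomputable def Fmap (P : Fin r → Finset W) (i₀ j : Fin r) (t : ℝ) (x : W ⊕ Fin r → ℝ) :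
    W ⊕ Fin r → ℝ :=
  fun v => x v + t * bfun P i₀ x *
    ((if v = Sum.inr j then ((Ntilde P i₀).card : ℝ) else 0) -
      (if v ∈ Ntilde P i₀ then 1 else 0))

variable {P N : Fin r → Finset W} {i₀ j : Fin r} {w₀ : W}

lemma b_nonneg {x : W ⊕ Fin r → ℝ} (h0 : ∀ v, 0 ≤ x v) : 0 ≤ bfun P i₀ x :=
  Finset.le_inf' _ _ fun v _ => h0 v

lemma b_le {x : W ⊕ Fin r → ℝ} {v : W ⊕ Fin r} (hv : v ∈ Ntilde P i₀) :
    bfun P i₀ x ≤ x v :=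
  Finset.inf'_le _ hv

lemma tau_subset_supp {x : W ⊕ Fin r → ℝ} (hb : 0 < bfun P i₀ x) :
    Ntilde P i₀ ⊆ supp x := by
  intro v hv
  have := b_le (x := x) hv
  exact mem_supp.mpr (by intro h; rw [h] at this; linarith)

lemma NtildeN_eq (hNi₀ : N i₀ = insert w₀ (P i₀)) :
    Ntilde N i₀ = insert (Sum.inl w₀) (Ntilde P i₀) := by
  simp [Ntilde, hNi₀, Finset.image_insert, Finset.insert_union]

lemma inrj_not_tau (hj : j ≠ i₀) : (Sum.inr j : W ⊕ Fin r) ∉ Ntilde P i₀ := by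
  simp [Ntilde, hj]

lemma inr_mem_Ntilde_iff {Q : Fin r → Finset W} {k i : Fin r} :
    (Sum.inr k : W ⊕ Fin r) ∈ Ntilde Q i ↔ k = i := by
  simp [Ntilde]

lemma core (hPN : ∀ i, i ≠ i₀ → P i = N i) (hNi₀ : N i₀ = insert w₀ (P i₀))
    (hj : j ≠ i₀) (hwj : w₀ ∈ P j)
    {x : W ⊕ Fin r → ℝ} (hx : x ∈ realization (KofN N)) (hb : 0 < bfun P i₀ x) :
    Sum.inl w₀ ∉ supp x ∧ KofN N (insert (Sum.inr j) (supp x)) := by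
  have hsx : KofN N (supp x) := supp_mem hx
  have hts : Ntilde P i₀ ⊆ supp x := tau_subset_supp hb
  have hw : Sum.inl w₀ ∉ supp x := by
    intro hmem
    exact hsx i₀ (by rw [NtildeN_eq hNi₀]; exact Finset.insert_subset hmem hts)
  refine ⟨hw, fun i hi => ?_⟩
  rcases eq_or_ne i j with rfl | hij
  · have hwN : w₀ ∈ N i := (hPN i hj) ▸ hwj
    have hwNt : (Sum.inl w₀ : W ⊕ Fin r) ∈ Ntilde N i :=
      Finset.mem_union_left _ (Finset.mem_image_of_mem _ hwN)
    rcases Finset.mem_insert.mp (hi hwNt) with h | h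
    · exact absurd h (by simp)
    · exact hw h
  · refine hsx i (fun v hv => ?_)
    rcases Finset.mem_insert.mp (hi hv) with rfl | h
    · exact absurd (inr_mem_Ntilde_iff.mp hv).symm hij
    · exact h

lemma F_mem (hPN : ∀ i, i ≠ i₀ → P i = N i) (hNi₀ : N i₀ = insert w₀ (P i₀))
    (hj : j ≠ i₀) (hwj : w₀ ∈ P j)
    {t : ℝ} (ht0 : 0 ≤ t) (ht1 : t ≤ 1)
    {x : W ⊕ Fin r → ℝ} (hx : x ∈ realization (KofN N)) :
    Fmap P i₀ j t x ∈ realization (KofN N) := by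
  have h0 := hx.1
  have h1 := hx.2.1
  rcases (b_nonneg (P := P) (i₀ := i₀) h0).eq_or_lt with hb | hb
  · have hFx : Fmap P i₀ j t x = x := funext fun v => by simp [Fmap, ← hb]
    rwa [hFx]
  have hcore := core hPN hNi₀ hj hwj hx hb
  have h0' : ∀ v, 0 ≤ Fmap P i₀ j t x v := by
    intro v
    by_cases hvj : v = Sum.inr j
    · subst hvj
      simp only [Fmap, if_neg (inrj_not_tau hj)]
      simp only [if_true]
      have hnn : 0 ≤ t * bfun P i₀ x * (((Ntilde P i₀).card : ℝ) - 0) :=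
        mul_nonneg (mul_nonneg ht0 hb.le) (by rw [sub_zero]; exact Nat.cast_nonneg _)
      linarith [h0 (Sum.inr j)]
    · by_cases hvt : v ∈ Ntilde P i₀
      · simp only [Fmap, if_neg hvj, if_pos hvt]
        have h1' : t * bfun P i₀ x ≤ bfun P i₀ x :=
          mul_le_of_le_one_left hb.le ht1
        have h2' : bfun P i₀ x ≤ x v := b_le hvt
        have : t * bfun P i₀ x * ((0:ℝ) - 1) = -(t * bfun P i₀ x) := by ring
        rw [this]
        linarith
      · simpa [Fmap, if_neg hvj, if_neg hvt] using h0 v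
  have hsum : ∑ v, Fmap P i₀ j t x v = 1 := by
    simp only [Fmap]
    rw [Finset.sum_add_distrib, h1, ← Finset.mul_sum]
    have hA : (∑ v : W ⊕ Fin r,
        ((if v = Sum.inr j then ((Ntilde P i₀).card : ℝ) else 0) -
          (if v ∈ Ntilde P i₀ then 1 else 0))) = 0 := by
      rw [Finset.sum_sub_distrib, Finset.sum_ite_eq' Finset.univ (Sum.inr j),
        Finset.sum_ite_mem, Finset.univ_inter, Finset.sum_const, nsmul_eq_mul, mul_one]
      simp
    rw [hA, mul_zero, add_zero]
  refine mem_realization_supp h0' hsum (kofN_anti hcore.2 ?_)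
  intro v hv
  rw [mem_supp] at hv
  rcases eq_or_ne v (Sum.inr j) with rfl | hvj
  · exact Finset.mem_insert_self _ _
  · refine Finset.mem_insert_of_mem (mem_supp.mpr fun hxv => hv ?_)
    have hvt : v ∉ Ntilde P i₀ := by
      intro hvt
      have := b_le (x := x) hvt
      rw [hxv] at this
      linarith
    simp [Fmap, hxv, if_neg hvj, if_neg hvt]

lemma F_one_mem (hPN : ∀ i, i ≠ i₀ → P i = N i) (hNi₀ : N i₀ = insert w₀ (P i₀))
    (hj : j ≠ i₀) (hwj : w₀ ∈ P j)
    {x : W ⊕ Fin r → ℝ} (hx : x ∈ realization (KofN N)) :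
    Fmap P i₀ j 1 x ∈ realization (KofN P) := by
  have h0 := hx.1
  obtain ⟨h0', hsum', -⟩ := F_mem hPN hNi₀ hj hwj zero_le_one le_rfl hx
  rcases (b_nonneg (P := P) (i₀ := i₀) h0).eq_or_lt with hb | hb
  · have hFx : Fmap P i₀ j 1 x = x := funext fun v => by simp [Fmap, ← hb]
    rw [hFx]
    refine mem_realization_supp hx.1 hx.2.1 (fun i hi => ?_)
    by_cases hii : i = i₀
    · obtain ⟨v, hv, hveq⟩ := Finset.exists_mem_eq_inf' (tau_ne P i₀) x
      have hv' : v ∈ Ntilde P i := hii ▸ hv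
      have hx0 : x v = 0 := by
        rw [← hveq]; exact (show bfun P i₀ x = 0 from hb.symm)
      exact mem_supp.mp (hi hv') hx0
    · have hQ : Ntilde P i = Ntilde N i := by rw [Ntilde, Ntilde, hPN i hii]
      exact supp_mem hx i (hQ ▸ hi)
  · obtain ⟨vstar, hvstar, hbeq⟩ := Finset.exists_mem_eq_inf' (tau_ne P i₀) x
    have hcore := core hPN hNi₀ hj hwj hx hb
    refine ⟨h0', hsum', (insert (Sum.inr j) (supp x)).erase vstar, fun i hi => ?_, ?_⟩
    · by_cases hii : i = i₀
      · exact (Finset.notMem_erase vstar _) (hi (hii ▸ hvstar))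
      · have hQ : Ntilde P i = Ntilde N i := by rw [Ntilde, Ntilde, hPN i hii]
        exact hcore.2 i ((hQ ▸ hi).trans (Finset.erase_subset _ _))
    · intro v hv
      have hvne : v ≠ vstar := by
        rintro rfl
        have hnj : v ≠ Sum.inr j := fun h => inrj_not_tau hj (h ▸ hvstar)
        apply hv
        have : x v = bfun P i₀ x := hbeq.symm
        simp only [Fmap, if_neg hnj, if_pos hvstar, this]
        ring
      refine Finset.mem_erase.mpr ⟨hvne, ?_⟩
      rcases eq_or_ne v (Sum.inr j) with rfl | hvj
      · exact Finset.mem_insert_self _ _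
      · refine Finset.mem_insert_of_mem (mem_supp.mpr fun hxv => hv ?_)
        have hvt : v ∉ Ntilde P i₀ := by
          intro hvt
          have := b_le (x := x) hvt
          rw [hxv] at this
          linarith
        simp [Fmap, hxv, if_neg hvj, if_neg hvt]

lemma b_zero_of_memP {x : W ⊕ Fin r → ℝ} (hx : x ∈ realization (KofN P)) :
    bfun P i₀ x = 0 := by
  have h := supp_mem hx i₀
  obtain ⟨v, hv, hvn⟩ := Finset.not_subset.mp h
  have hx0 : x v = 0 := by
    by_contra hne
    exact hvn (mem_supp.mpr hne)
  exact le_antisymm (by rw [← hx0]; exact b_le hv) (b_nonneg hx.1)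

lemma F_fix {x : W ⊕ Fin r → ℝ} (hx : x ∈ realization (KofN P)) (t : ℝ) :
    Fmap P i₀ j t x = x :=
  funext fun v => by simp [Fmap, b_zero_of_memP (i₀ := i₀) hx]

lemma F_continuous (P : Fin r → Finset W) (i₀ j : Fin r) :
    Continuous fun p : ℝ × (W ⊕ Fin r → ℝ) => Fmap P i₀ j p.1 p.2 := by
  unfold Fmap bfun
  refine continuous_pi fun v => ?_
  refine Continuous.add ((continuous_apply v).comp continuous_snd) ?_
  refine Continuous.mul (Continuous.mul continuous_fst ?_) continuous_const
  exact (continuous_finset_inf' _ (tau_ne P i₀)).comp continuous_snd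

lemma step (hPN : ∀ i, i ≠ i₀ → P i = N i) (hNi₀ : N i₀ = insert w₀ (P i₀))
    (hw₀ : w₀ ∉ P i₀) (hj : j ≠ i₀) (hwj : w₀ ∈ P j) :
    ∃ h : ContinuousMap.HomotopyEquiv (realization (KofN P)) (realization (KofN N)),
      ∀ x : realization (KofN P), (h.toFun x : (W ⊕ Fin r) → ℝ) = (x : (W ⊕ Fin r) → ℝ) := by
  have hsub : realization (KofN P) ⊆ realization (KofN N) := by
    refine realization_mono (fun i => ?_)
    by_cases hii : i = i₀
    · subst hii; rw [hNi₀]; exact Finset.subset_insert _ _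
    · rw [hPN i hii]
  let ι : C(realization (KofN P), realization (KofN N)) :=
    ⟨Set.inclusion hsub, continuous_inclusion hsub⟩
  let R : C(realization (KofN N), realization (KofN P)) :=
    ⟨fun x => ⟨Fmap P i₀ j 1 x.1, F_one_mem hPN hNi₀ hj hwj x.2⟩,
      Continuous.subtype_mk
        ((F_continuous P i₀ j).comp (continuous_const.prodMk continuous_subtype_val)) _⟩
  have hRι : R.comp ι = ContinuousMap.id _ := by
    apply ContinuousMap.ext
    intro x
    exact Subtype.ext (F_fix x.2 1)
  let H : ContinuousMap.Homotopy (ι.comp R) (ContinuousMap.id _) :=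
    { toFun := fun p => ⟨Fmap P i₀ j (1 - (p.1 : ℝ)) p.2.1,
        F_mem hPN hNi₀ hj hwj (by linarith [p.1.2.2]) (by linarith [p.1.2.1]) p.2.2⟩
      continuous_toFun := by
        refine Continuous.subtype_mk ?_ _
        exact (F_continuous P i₀ j).comp
          ((continuous_const.sub (continuous_subtype_val.comp continuous_fst)).prodMk
            (continuous_subtype_val.comp continuous_snd))
      map_zero_left := fun x => Subtype.ext (by
        show Fmap P i₀ j (1 - ((0 : unitInterval) : ℝ)) (x : (W ⊕ Fin r) → ℝ) = _
        norm_num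
        rfl)
      map_one_left := fun x => Subtype.ext (by funext v; simp [Fmap]) }
  refine ⟨⟨ι, R, ?_, ⟨H⟩⟩, fun x => rfl⟩
  rw [hRι]

lemma main_aux (M : Fin r → Finset W) (hcover : Finset.univ.biUnion M = Finset.univ) :
    ∀ (n : ℕ) (N : Fin r → Finset W), (∀ i, M i ⊆ N i) →
      (∑ i, ((N i) \ (M i)).card) = n →
      ∃ h : ContinuousMap.HomotopyEquiv (realization (KofN M)) (realization (KofN N)),
        ∀ x : realization (KofN M), (h.toFun x : (W ⊕ Fin r) → ℝ) = (x : (W ⊕ Fin r) → ℝ) := by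
  intro n
  induction n with
  | zero =>
    intro N hMN hsum
    have hall := Finset.sum_eq_zero_iff.mp hsum
    have hMN' : M = N := by
      funext i
      refine Finset.Subset.antisymm (hMN i) (fun w hw => ?_)
      by_contra hwM
      have hmem : w ∈ N i \ M i := Finset.mem_sdiff.mpr ⟨hw, hwM⟩
      have : N i \ M i = ∅ := Finset.card_eq_zero.mp (hall i (Finset.mem_univ i))
      rw [this] at hmem
      exact absurd hmem (Finset.notMem_empty w)
    subst hMN'
    exact ⟨ContinuousMap.HomotopyEquiv.refl _, fun x => rfl⟩
  | succ n ih =>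
    intro N hMN hsum
    have hpos : ∃ i₀, (N i₀ \ M i₀).Nonempty := by
      by_contra hcon
      push_neg at hcon
      rw [Finset.sum_congr rfl (fun i _ => by rw [hcon i, Finset.card_empty])] at hsum
      simp at hsum
    obtain ⟨i₀, hi₀⟩ := hpos
    obtain ⟨w₀, hw₀⟩ := hi₀
    have hw₀N : w₀ ∈ N i₀ := (Finset.mem_sdiff.mp hw₀).1
    have hw₀M : w₀ ∉ M i₀ := (Finset.mem_sdiff.mp hw₀).2
    set P : Fin r → Finset W := fun i => if i = i₀ then (N i₀).erase w₀ else N i with hPdef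
    have hPN : ∀ i, i ≠ i₀ → P i = N i := fun i hii => if_neg hii
    have hPi₀ : P i₀ = (N i₀).erase w₀ := if_pos rfl
    have hMP : ∀ i, M i ⊆ P i := by
      intro i
      by_cases hii : i = i₀
      · subst hii; rw [hPi₀]; exact Finset.subset_erase.mpr ⟨hMN _, hw₀M⟩
      · rw [hPN i hii]; exact hMN i
    have hsumP : ∑ i, ((P i) \ (M i)).card = n := by
      have hsplit : ∀ Q : Fin r → Finset W,
          ∑ i, ((Q i) \ (M i)).card
            = ∑ i ∈ Finset.univ.erase i₀, ((Q i) \ (M i)).card + ((Q i₀) \ (M i₀)).card :=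
        fun Q => (Finset.sum_erase_add _ _ (Finset.mem_univ i₀)).symm
      rw [hsplit] at hsum
      rw [hsplit]
      rw [Finset.sum_congr rfl (fun i hi => by rw [hPN i (Finset.mem_erase.mp hi).1])]
      have hcard : ((P i₀) \ (M i₀)).card + 1 = ((N i₀) \ (M i₀)).card := by
        rw [hPi₀, Finset.erase_sdiff_comm, Finset.card_erase_of_mem hw₀]
        have : 0 < (N i₀ \ M i₀).card := Finset.card_pos.mpr ⟨w₀, hw₀⟩
        omega
      omega
    obtain ⟨h₁, hc₁⟩ := ih P hMP hsumP
    have hw₀W : w₀ ∈ Finset.univ.biUnion M := hcover ▸ Finset.mem_univ w₀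
    obtain ⟨j, -, hwj⟩ := Finset.mem_biUnion.mp hw₀W
    have hj : j ≠ i₀ := fun h => hw₀M (h ▸ hwj)
    have hwjP : w₀ ∈ P j := by rw [hPN j hj]; exact hMN j hwj
    have hNi₀ : N i₀ = insert w₀ (P i₀) := by rw [hPi₀, Finset.insert_erase hw₀N]
    have hw₀P : w₀ ∉ P i₀ := by rw [hPi₀]; exact Finset.notMem_erase _ _
    obtain ⟨h₂, hc₂⟩ := step hPN hNi₀ hw₀P hj hwjP
    refine ⟨h₁.trans h₂, fun x => ?_⟩
    have htr : (h₁.trans h₂).toFun x = h₂.toFun (h₁.toFun x) := rfl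
    rw [htr, hc₂, hc₁]

end Statement9

/-- if `M i ⊆ N i` for all `i` and `M 1 ∪ ⋯ ∪ M r = W`, then the
inclusion `|K(M)| → |K(N)|` is a homotopy equivalence: there is a homotopy
equivalence whose underlying map is the inclusion. -/
theorem inclusion_realization_KofN_homotopyEquiv {W : Type*} [DecidableEq W] [Fintype W]
    (r : ℕ) (M N : Fin r → Finset W)
    (hMN : ∀ i, M i ⊆ N i)
    (hcover : Finset.univ.biUnion M = Finset.univ) :
    ∃ h : ContinuousMap.HomotopyEquiv (realization (KofN M)) (realization (KofN N)),
      ∀ x : realization (KofN M), (h.toFun x : (W ⊕ Fin r) → ℝ) = (x : (W ⊕ Fin r) → ℝ) := by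
  exact Statement9.main_aux M hcover _ N hMN rfl
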